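/- Let k ≥ 1 be an integer and let H be a graph on n ≥ k vertices that is saturated with respect to the property χ_{>k} of having chromatic number at least k+1 (i.e., χ(H) ≤ k, but χ(H + e) ≥ k+1 for every non-edge e of H). Then H is a complete k-partite graph: there is a partition of the vertex set of H into k nonempty independent sets such that every two vertices lying in different parts are adjacent. -/
import Mathlib


open SimpleGraph

/-- The graph obtained from `G` by adding the edge `e`. -/
def addEdge {V : Type*} (G : SimpleGraph V) (e : Sym2 V) : SimpleGraph V :=
  G ⊔ SimpleGraph.fromEdgeSet {e}

/-- `G` is saturated with respect to the (monotone increasing) property `P`: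
`G` does not satisfy `P`, but adding any non-edge of `G` produces a graph satisfying `P`. -/
def saturatedWrt {V : Type*} (P : SimpleGraph V → Prop) (G : SimpleGraph V) : Prop :=
  ¬ P G ∧ ∀ e : Sym2 V, ¬ e.IsDiag → e ∉ G.edgeSet → P (addEdge G e)

/-- The property of having chromatic number at least `k + 1`. -/
def chiGt {V : Type*} (k : ℕ) (G : SimpleGraph V) : Prop :=
  ((k : ℕ∞) + 1) ≤ G.chromaticNumber

lemma addEdge_adj {V : Type*} (G : SimpleGraph V) (u v x y : V) :
    (addEdge G s(u,v)).Adj x y ↔ G.Adj x y ∨ (s(x,y) = s(u,v) ∧ x ≠ y) := by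
  simp [addEdge]

/-- If there is a `k`-coloring of `G` plus a non-edge, saturation is contradicted. -/
lemma no_ext {V : Type*} (G : SimpleGraph V) (k : ℕ)
    (hs : saturatedWrt (chiGt k) G) {u v : V} (huv : u ≠ v) (hna : ¬ G.Adj u v)
    (D : (addEdge G s(u,v)).Coloring (Fin k)) : False := by
  have h1 : (addEdge G s(u,v)).chromaticNumber ≤ k := Colorable.chromaticNumber_le ⟨D⟩
  have h2 : ((k : ℕ∞) + 1) ≤ (addEdge G s(u,v)).chromaticNumber := by
    refine hs.2 s(u,v) ?_ ?_
    · simp [huv]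
    · simpa using hna
  have h3 : ((k : ℕ∞) + 1) ≤ (k : ℕ∞) := le_trans h2 h1
  have h4 : (k : ℕ∞) < (k : ℕ∞) + 1 := by
    exact (ENat.lt_add_one_iff (by simp)).mpr le_rfl
  exact absurd (lt_of_lt_of_le h4 h3) (lt_irrefl _)

/-- For `k ≥ 1` and `n ≥ k`, every graph on `n` vertices saturated with respect to the
property of having chromatic number at least `k + 1` is complete `k`-partite: there is a
partition of its vertices into `k` nonempty independent sets (the fibers of a surjection
onto `Fin k`) such that two vertices are adjacent iff they lie in different parts. -/
theorem statement_9 (k n : ℕ) (hk : 1 ≤ k) (hn : k ≤ n)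
    (H : SimpleGraph (Fin n)) (hsat : saturatedWrt (chiGt k) H) :
    ∃ c : Fin n → Fin k, Function.Surjective c ∧
      ∀ u v : Fin n, H.Adj u v ↔ c u ≠ c v := by
  -- obtain a proper k-coloring of H
  have hcol : H.Colorable k := by
    have hne : ¬ ((k : ℕ∞) + 1) ≤ H.chromaticNumber := hsat.1
    have hle : H.chromaticNumber ≤ k := by
      rcases lt_or_ge H.chromaticNumber ((k : ℕ∞) + 1) with h | h
      · exact Order.le_of_lt_add_one h
      · exact absurd h hne
    exact (chromaticNumber_le_iff_colorable).mp hle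
  obtain ⟨C⟩ := hcol
  -- key: non-adjacent distinct vertices get the same color
  have key : ∀ u v : Fin n, u ≠ v → ¬ H.Adj u v → C u = C v := by
    intro u v huv hna
    by_contra hne
    refine no_ext H k hsat huv hna (Coloring.mk C ?_)
    intro x y hxy
    rw [addEdge_adj] at hxy
    rcases hxy with h | ⟨h, hxyne⟩
    · exact C.valid h
    · rw [Sym2.eq_iff] at h
      rcases h with ⟨rfl, rfl⟩ | ⟨rfl, rfl⟩
      · exact hne
      · exact fun h => hne h.symm
  -- C is surjective
  have hsurj : Function.Surjective C := by
    by_contra hns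
    simp only [Function.Surjective, not_forall] at hns
    obtain ⟨m, hm⟩ := hns
    replace hm : ∀ x : Fin n, C x ≠ m := fun x h => hm ⟨x, h⟩
    -- C is not injective since it misses m and n ≥ k
    have hcard : Fintype.card {x : Fin k // x ≠ m} < Fintype.card (Fin n) := by
      have : Fintype.card {x : Fin k // x ≠ m} = k - 1 := by
        simp [Fintype.card_subtype_compl, Fintype.card_subtype_eq]
      rw [this, Fintype.card_fin]
      omega
    obtain ⟨u, v, huv, heq⟩ :=
      Fintype.exists_ne_map_eq_of_card_lt (fun x : Fin n => (⟨C x, hm x⟩ : {x : Fin k // x ≠ m})) hcard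
    have hCuv : C u = C v := congrArg Subtype.val heq
    have hna : ¬ H.Adj u v := fun h => C.valid h hCuv
    -- recolor u with the unused color m
    refine no_ext H k hsat huv hna (Coloring.mk (fun x => if x = u then m else C x) ?_)
    intro x y hxy
    rw [addEdge_adj] at hxy
    rcases hxy with h | ⟨h, hxyne⟩
    · by_cases hx : x = u <;> by_cases hy : y = u
      · exact absurd (hx.trans hy.symm) (H.ne_of_adj h)
      · simp only [hx, if_pos rfl, hy, if_neg hy]
        exact fun he => hm y he.symm
      · simp only [hx, if_neg hx, hy, if_pos rfl]
        exact hm x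
      · simp only [if_neg hx, if_neg hy]
        exact C.valid h
    · rw [Sym2.eq_iff] at h
      rcases h with ⟨hx, hy⟩ | ⟨hx, hy⟩
      · have hyu : y ≠ u := by rw [hy]; exact Ne.symm huv
        simp only [if_pos hx, if_neg hyu]
        exact fun he => hm y he.symm
      · have hxu : x ≠ u := by rw [hx]; exact Ne.symm huv
        simp only [if_neg hxu, if_pos hy]
        exact hm x
  refine ⟨C, hsurj, fun u v => ⟨fun h => C.valid h, fun h => ?_⟩⟩
  by_contra hna
  rcases eq_or_ne u v with rfl | hne
  · exact h rfl
  · exact h (key u v hne hna)
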